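/- A positive integer n has no even decompositions (equivalently, lspec(n) contains no even element) if and only if n = 2^α · k for some integer α ≥ 0 and odd positive integer k with 2^(α+1) > k. -/
import Mathlib


/-- The length spectrum of `n`: the set of lengths `l` of decompositions of `n`,
i.e. sequences `a, a+1, ..., a+(l-1)` of `l ≥ 1` consecutive positive integers summing to `n`. -/
def lspec (n : ℕ) : Set ℕ :=
  {l | 0 < l ∧ ∃ a : ℕ, 0 < a ∧ ∑ i ∈ Finset.range l, (a + i) = n}

/-- `A₀`: the even elements of `A`. -/
def evens (A : Set ℕ) : Set ℕ := {x ∈ A | Even x}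

/-- `A₁`: the odd elements of `A`. -/
def odds (A : Set ℕ) : Set ℕ := {x ∈ A | Odd x}

/-- The spectral class of `n`: positive integers with the same length spectrum as `n`. -/
def specClass (n : ℕ) : Set ℕ := {m | 0 < m ∧ lspec m = lspec n}

/-- A set is balanced if it has equally many even and odd elements. -/
def balancedSet (S : Set ℕ) : Prop := (evens S).encard = (odds S).encard

/-- A set is unmixed if it has no even elements. -/
def unmixedSet (S : Set ℕ) : Prop := evens S = ∅

/-- A set is lopsided if it is neither balanced nor unmixed. -/
def lopsidedSet (S : Set ℕ) : Prop := ¬ balancedSet S ∧ ¬ unmixedSet S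

/-- The set of ratios `m'/m` over pairs of complementary factors `m ≤ m'` of `k`;
`q(k)` is the least element of this set. -/
def qSet (k : ℕ) : Set ℚ :=
  {r | ∃ m m' : ℕ, 0 < m ∧ m ≤ m' ∧ m * m' = k ∧ r = (m' : ℚ) / (m : ℚ)}

/-- The exceptional set `E(S)`: numbers `a = b·c` with `b, c ∈ S₁`, `a > max S₀`, and
whose set of divisors of `(max S₁)·a` strictly below `a` is exactly `S₁`. -/
def excSet (S : Set ℕ) : Set ℕ :=
  {a | (∃ b ∈ odds S, ∃ c ∈ odds S, a = b * c) ∧ sSup (evens S) < a ∧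
    {d | d ∣ sSup (odds S) * a ∧ d < a} = odds S}

/-- `P(S)`: the primes strictly greater than `max S₀`. -/
def primesAbove (S : Set ℕ) : Set ℕ := {p | p.Prime ∧ sSup (evens S) < p}

/-- A balanced spectrum is non-excessive if `S₁` is exactly the set of divisors of `max S₁`. -/
def nonExcessive (S : Set ℕ) : Prop := odds S = {d | d ∣ sSup (odds S)}

/-- `γ_p`: the largest `k` with `p^k ∈ S₁`. -/
noncomputable def gammaIdx (S : Set ℕ) (p : ℕ) : ℕ := sSup {k | p ^ k ∈ odds S}

/-- `μ_p = v_p(max S₁)`. -/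
noncomputable def muIdx (S : Set ℕ) (p : ℕ) : ℕ := (sSup (odds S)).factorization p

/-- The excessive index `ε_p = γ_p − μ_p` of a prime `p` with respect to `S`. -/
noncomputable def excIdx (S : Set ℕ) (p : ℕ) : ℕ := gammaIdx S p - muIdx S p

/-- The difference set `D(S)`: `S₁` with its `|S₀|` smallest elements removed when
`|S₀| ≤ |S₁|`, and empty otherwise.  An element `x` of `S₁` survives exactly when at least
`|S₀|` elements of `S₁` lie strictly below it. -/
def diffSet (S : Set ℕ) : Set ℕ :=
  {x ∈ odds S | (evens S).encard ≤ {y ∈ odds S | y < x}.encard}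
lemma two_mul_sum_consec (l a : ℕ) :
    2 * ∑ i ∈ Finset.range l, (a + i) = l * (2 * a + l - 1) := by
  cases l with
  | zero => simp
  | succ m =>
    have h := Finset.sum_range_id_mul_two (m + 1)
    rw [Finset.sum_add_distrib, Finset.sum_const, Finset.card_range, smul_eq_mul]
    have h2 : 2 * a + (m + 1) - 1 = 2 * a + m := by omega
    rw [h2]
    have h' : (∑ i ∈ Finset.range (m + 1), i) * 2 = (m + 1) * m := by simpa using h
    calc 2 * ((m + 1) * a + ∑ i ∈ Finset.range (m + 1), i)
        = 2 * (m + 1) * a + (∑ i ∈ Finset.range (m + 1), i) * 2 := by ring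
      _ = 2 * (m + 1) * a + (m + 1) * m := by rw [h']
      _ = (m + 1) * (2 * a + m) := by ring

/-- `n` has no even decompositions iff `n = 2^α · k` with `k` odd and `2^(α+1) > k`. -/
theorem unmixed_iff (n : ℕ) (hn : 0 < n) :
    evens (lspec n) = ∅ ↔
      ∃ α k : ℕ, Odd k ∧ 0 < k ∧ n = 2 ^ α * k ∧ k < 2 ^ (α + 1) := by
  constructor
  · intro hE
    set α := n.factorization 2 with hα
    set k := n / 2 ^ α with hk
    have hnn : n ≠ 0 := hn.ne'
    have hmul : 2 ^ α * k = n := Nat.ordProj_mul_ordCompl_eq_self n 2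
    have hkodd : Odd k := by
      have h2 : ¬ 2 ∣ k := Nat.not_dvd_ordCompl Nat.prime_two hnn
      exact Nat.odd_iff.mpr (by omega)
    have hkpos : 0 < k := hkodd.pos
    refine ⟨α, k, hkodd, hkpos, hmul.symm, ?_⟩
    by_contra hlt
    push_neg at hlt
    -- construct an even decomposition
    obtain ⟨j, hj⟩ := hkodd
    have hje : 2 ^ α ≤ j := by
      have : 2 ^ (α + 1) ≤ 2 * j + 1 := by omega
      rw [pow_succ] at this; omega
    have hmem : (2 ^ (α + 1)) ∈ evens (lspec n) := by
      refine ⟨⟨pow_pos (by norm_num) _, j + 1 - 2 ^ α, by omega, ?_⟩, ?_⟩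
      · have hsum := two_mul_sum_consec (2 ^ (α + 1)) (j + 1 - 2 ^ α)
        have hpow : (2:ℕ) ^ (α + 1) = 2 * 2 ^ α := by rw [pow_succ]; ring
        have heq : 2 * (j + 1 - 2 ^ α) + 2 ^ (α + 1) - 1 = k := by
          rw [hpow]; omega
        rw [heq] at hsum
        have h2n : 2 ^ (α + 1) * k = 2 * n := by
          rw [hpow, mul_assoc, hmul]
        omega
      · exact ⟨2 ^ α, by rw [pow_succ, mul_two]⟩
    rw [hE] at hmem
    exact hmem
  · rintro ⟨α, k, hkodd, hkpos, hnk, hklt⟩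
    rw [Set.eq_empty_iff_forall_notMem]
    rintro l ⟨⟨hl, a, ha, hsum⟩, hleven⟩
    have key : l * (2 * a + l - 1) = 2 ^ (α + 1) * k := by
      have := two_mul_sum_consec l a
      rw [hsum] at this
      rw [← this, hnk, pow_succ]; ring
    set O := 2 * a + l - 1 with hO
    have hOodd : Odd O := by
      obtain ⟨m, hm⟩ := hleven
      rw [Nat.odd_iff]; omega
    have hOl : l + 1 ≤ O := by omega
    have hdvd : 2 ^ (α + 1) ∣ l := by
      have hcop : (Nat.Coprime (2 ^ (α + 1)) O) :=
        Nat.Coprime.pow_left _ (by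
          rw [Nat.coprime_two_left]; exact hOodd)
      exact hcop.dvd_of_dvd_mul_right ⟨k, key⟩
    have hlge : 2 ^ (α + 1) ≤ l := Nat.le_of_dvd hl hdvd
    have : 2 ^ (α + 1) * k < l * O := by
      calc 2 ^ (α + 1) * k < 2 ^ (α + 1) * (l + 1) := by
            exact mul_lt_mul_of_pos_left (by omega) (pow_pos two_pos _)
        _ ≤ l * (l + 1) := Nat.mul_le_mul hlge (le_refl _)
        _ ≤ l * O := Nat.mul_le_mul (le_refl l) hOl
    omega
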